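/- Instantiation suffices for ∃∀-sentences over artifact sorts: a sentence of the form ∃e̅ (Diff(e̅) ∧ ∀i̅ φ(e̅, i̅)) — where e̅, i̅ range over sorts that occur in the structure only as arguments of unary function symbols into other sorts, equality between such elements being the only atoms involving them directly — is satisfiable in some structure if and only if the quantifier-free-in-i̅ sentence ∃e̅ (Diff(e̅) ∧ ⋀_σ φ(e̅, i̅σ)) is satisfiable, where σ ranges over all sort-respecting substitutions mapping the variables i̅ into the variables e̅. -/

import Mathlib

universe u

namespace InstSig

variable (AS BS Cm F : Type) (csrc : Cm → AS) (ctgt : Cm → BS)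
  (fsrc ftgt : F → BS) (E : Type) (vs : E → AS) (m : ℕ) (xs : Fin m → BS)

/-- Terms of basic sorts: basic variables, artifact components applied to
artifact-sort variables, and basic unary functions applied to terms (artifact
elements occur only as arguments of the unary component symbols). -/
inductive BT : BS → Type
  | var (i : Fin m) : BT (xs i)
  | comp (c : Cm) (e : E) (h : vs e = csrc c) : BT (ctgt c)
  | app (f : F) (t : BT (fsrc f)) : BT (ftgt f)

/-- Quantifier-free formulae: boolean combinations of equalities between
basic terms and of equalities between artifact-sort variables (the only atoms
directly involving them). -/
inductive Fm : Type
  | beq {s : BS} (t u : BT AS BS Cm F csrc ctgt fsrc ftgt E vs m xs s) : Fm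
  | aeq (e e' : E) (h : vs e = vs e') : Fm
  | not (φ : Fm) : Fm
  | and (φ ψ : Fm) : Fm
  | or (φ ψ : Fm) : Fm
  | tt : Fm

/-- An interpretation of the two-level signature. -/
structure Interp : Type (u + 1) where
  A : AS → Type u
  B : BS → Type u
  cI : ∀ c : Cm, A (csrc c) → B (ctgt c)
  fI : ∀ f : F, B (fsrc f) → B (ftgt f)

variable {AS BS Cm F csrc ctgt fsrc ftgt E vs m xs}

/-- Evaluation of basic terms. -/
def evalT (I : Interp.{u} AS BS Cm F csrc ctgt fsrc ftgt)
    (va : ∀ e : E, I.A (vs e)) (vx : ∀ i : Fin m, I.B (xs i)) :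
    ∀ {s : BS}, BT AS BS Cm F csrc ctgt fsrc ftgt E vs m xs s → I.B s
  | _, .var i => vx i
  | _, .comp c e h => I.cI c (cast (congrArg I.A h) (va e))
  | _, .app f t => I.fI f (evalT I va vx t)

/-- Satisfaction of a quantifier-free formula. -/
def Realize (I : Interp.{u} AS BS Cm F csrc ctgt fsrc ftgt)
    (va : ∀ e : E, I.A (vs e)) (vx : ∀ i : Fin m, I.B (xs i)) :
    Fm AS BS Cm F csrc ctgt fsrc ftgt E vs m xs → Prop
  | .beq t u => evalT I va vx t = evalT I va vx u
  | .aeq e e' h => cast (congrArg I.A h) (va e) = va e'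
  | .not φ => ¬ Realize I va vx φ
  | .and φ ψ => Realize I va vx φ ∧ Realize I va vx ψ
  | .or φ ψ => Realize I va vx φ ∨ Realize I va vx ψ
  | .tt => True

end InstSig

open InstSig

/-- Pairwise distinctness (`Diff(e̅)`) of the values of same-sort existential
variables. -/
def Distinct {AS : Type} {k : ℕ} {esorts : Fin k → AS} {A : AS → Type u}
    (ve : ∀ p : Fin k, A (esorts p)) : Prop :=
  ∀ p q : Fin k, p ≠ q → ∀ h : esorts p = esorts q,
    cast (congrArg A h) (ve p) ≠ ve q

/-- Combine valuations of the `e̅` and `i̅` variables. -/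
def combine {AS : Type} {k l : ℕ} {esorts : Fin k → AS} {isorts : Fin l → AS}
    {A : AS → Type u} (ve : ∀ p : Fin k, A (esorts p))
    (vi : ∀ j : Fin l, A (isorts j)) :
    ∀ v : Fin k ⊕ Fin l, A (Sum.elim esorts isorts v)
  | .inl p => ve p
  | .inr j => vi j

section AuxInst

variable {AS BS Cm F : Type} {csrc : Cm → AS} {ctgt : Cm → BS}
  {fsrc ftgt : F → BS} {E : Type} {vs : E → AS} {m : ℕ} {xs : Fin m → BS}
  {k : ℕ} {esorts : Fin k → AS}

/-- The artifact carriers of the term-like interpretation: named elements. -/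
def AuxA (esorts : Fin k → AS) (s : AS) : Type u :=
  ULift.{u} {p : Fin k // esorts p = s}

lemma castAuxA {s s' : AS} (h : s = s') (a : AuxA.{u} esorts s) :
    (cast (congrArg (AuxA.{u} esorts) h) a).down.1 = a.down.1 := by
  subst h; rfl

lemma auxA_ext {s : AS} {a b : AuxA.{u} esorts s} (h : a.down.1 = b.down.1) :
    a = b := by
  cases a with | up a => cases b with | up b =>
  cases Subtype.ext h; rfl

/-- The term-like interpretation built from named elements. -/
def AuxI (I : Interp.{u} AS BS Cm F csrc ctgt fsrc ftgt)
    (ve : ∀ p : Fin k, I.A (esorts p)) :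
    Interp.{u} AS BS Cm F csrc ctgt fsrc ftgt where
  A := AuxA.{u} esorts
  B := I.B
  cI c a := I.cI c (cast (congrArg I.A a.down.2) (ve a.down.1))
  fI := I.fI

/-- Transfer a valuation of artifact variables in `AuxI` back to `I`. -/
def auxVal (I : Interp.{u} AS BS Cm F csrc ctgt fsrc ftgt)
    (ve : ∀ p : Fin k, I.A (esorts p))
    (va' : ∀ e : E, (AuxI I ve).A (vs e)) (e : E) : I.A (vs e) :=
  cast (congrArg I.A (va' e).down.2) (ve ((va' e).down.1))

lemma cast_ve_congr (I : Interp.{u} AS BS Cm F csrc ctgt fsrc ftgt)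
    (ve : ∀ p : Fin k, I.A (esorts p)) {s : AS} {p q : Fin k}
    (hpq : p = q) (hp : I.A (esorts p) = I.A s) (hq : I.A (esorts q) = I.A s) :
    cast hp (ve p) = cast hq (ve q) := by
  subst hpq; rfl

lemma cast_ve_inj (I : Interp.{u} AS BS Cm F csrc ctgt fsrc ftgt)
    {ve : ∀ p : Fin k, I.A (esorts p)} (hd : Distinct ve) {s : AS}
    {p q : Fin k} (hps : esorts p = s) (hqs : esorts q = s)
    {hp : I.A (esorts p) = I.A s} {hq : I.A (esorts q) = I.A s}
    (h : cast hp (ve p) = cast hq (ve q)) :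
    p = q := by
  by_contra hne
  refine hd p q hne (hps.trans hqs.symm) ?_
  have h1 : HEq (ve p) (ve q) := (heq_of_cast_eq _ h).trans (cast_heq _ _)
  exact cast_eq_iff_heq.mpr h1

lemma evalT_aux (I : Interp.{u} AS BS Cm F csrc ctgt fsrc ftgt)
    (ve : ∀ p : Fin k, I.A (esorts p))
    (va' : ∀ e : E, (AuxI I ve).A (vs e)) (vx : ∀ i : Fin m, I.B (xs i)) :
    ∀ {s : BS} (t : BT AS BS Cm F csrc ctgt fsrc ftgt E vs m xs s),
      evalT (AuxI I ve) va' vx t = evalT I (auxVal I ve va') vx t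
  | _, .var i => rfl
  | _, .app f t => by
      simp only [evalT, evalT_aux I ve va' vx t]; rfl
  | _, .comp c e h => by
      show I.cI c _ = I.cI c _
      congr 1
      show cast _ (ve _) = cast _ (cast _ (ve _))
      rw [cast_cast]
      exact cast_ve_congr I ve (castAuxA h (va' e)) _ _

lemma realize_aux (I : Interp.{u} AS BS Cm F csrc ctgt fsrc ftgt)
    {ve : ∀ p : Fin k, I.A (esorts p)} (hd : Distinct ve)
    (va' : ∀ e : E, (AuxI I ve).A (vs e)) (vx : ∀ i : Fin m, I.B (xs i)) :
    ∀ ψ : Fm AS BS Cm F csrc ctgt fsrc ftgt E vs m xs,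
      Realize (AuxI I ve) va' vx ψ ↔ Realize I (auxVal I ve va') vx ψ
  | .beq t u => by
      simp only [Realize, evalT_aux]; exact Iff.rfl
  | .aeq e e' h => by
      show cast (congrArg (AuxA.{u} esorts) h) (va' e) = va' e' ↔
        cast (congrArg I.A h) (cast _ (ve _)) = cast _ (ve _)
      rw [cast_cast]
      constructor
      · intro heq
        refine cast_ve_congr I ve ?_ _ _
        have := castAuxA h (va' e)
        rw [heq] at this
        exact this.symm
      · intro heq
        have hpq := cast_ve_inj I hd ((va' e).down.2.trans h) (va' e').down.2 heq
        exact auxA_ext (by rw [castAuxA h (va' e), hpq])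
  | .not ψ => by
      simp only [Realize, realize_aux I hd va' vx ψ]
  | .and ψ χ => by
      simp only [Realize, realize_aux I hd va' vx ψ, realize_aux I hd va' vx χ]
  | .or ψ χ => by
      simp only [Realize, realize_aux I hd va' vx ψ, realize_aux I hd va' vx χ]
  | .tt => Iff.rfl

end AuxInst

/-- **Instantiation suffices for `∃∀`-sentences over artifact sorts.** A
sentence `∃e̅ (Diff(e̅) ∧ ∀i̅ φ(e̅, i̅))` — where `e̅, i̅` range over sorts
that occur only as arguments of unary function symbols into basic sorts,
equality between such elements being the only atoms directly involving them —
is satisfiable in some interpretation iff the sentence obtained by replacing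
`∀i̅ φ` with the conjunction of the instances `φ(e̅, i̅σ)` over all
sort-respecting substitutions `σ` mapping the `i̅` into the `e̅` is
satisfiable. -/
theorem instantiation_suffices_exists_forall
    (AS BS Cm F : Type) (csrc : Cm → AS) (ctgt : Cm → BS) (fsrc ftgt : F → BS)
    (k l : ℕ) (esorts : Fin k → AS) (isorts : Fin l → AS)
    (m : ℕ) (xs : Fin m → BS)
    (φ : Fm AS BS Cm F csrc ctgt fsrc ftgt (Fin k ⊕ Fin l)
      (Sum.elim esorts isorts) m xs) :
    (∃ (I : Interp.{u} AS BS Cm F csrc ctgt fsrc ftgt)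
       (ve : ∀ p : Fin k, I.A (esorts p)) (vx : ∀ i : Fin m, I.B (xs i)),
       Distinct ve ∧
         ∀ vi : ∀ j : Fin l, I.A (isorts j), Realize I (combine ve vi) vx φ) ↔
    (∃ (I : Interp.{u} AS BS Cm F csrc ctgt fsrc ftgt)
       (ve : ∀ p : Fin k, I.A (esorts p)) (vx : ∀ i : Fin m, I.B (xs i)),
       Distinct ve ∧
         ∀ (σ : Fin l → Fin k) (hσ : ∀ j : Fin l, isorts j = esorts (σ j)),
           Realize I
             (combine ve (fun j => cast (congrArg I.A (hσ j).symm) (ve (σ j))))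
             vx φ) := by
  constructor
  · rintro ⟨I, ve, vx, hd, hall⟩
    exact ⟨I, ve, vx, hd, fun σ hσ =>
      hall (fun j => cast (congrArg I.A (hσ j).symm) (ve (σ j)))⟩
  · rintro ⟨I, ve, vx, hd, hall⟩
    refine ⟨AuxI I ve, fun p => ⟨⟨p, rfl⟩⟩, vx, ?_, ?_⟩
    · intro p q hpq h hcast
      exact hpq ((castAuxA (esorts := esorts) h (⟨⟨p, rfl⟩⟩ : AuxA.{u} esorts (esorts p))).symm.trans
        (congrArg (fun a => a.down.1) hcast))
    · intro vi
      set σ : Fin l → Fin k := fun j => (vi j).down.1 with hσdef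
      have hσ : ∀ j : Fin l, isorts j = esorts (σ j) := fun j => ((vi j).down.2).symm
      have key := hall σ hσ
      rw [realize_aux I hd]
      have hval : auxVal I ve (combine (fun p => ⟨⟨p, rfl⟩⟩) vi) =
          combine ve (fun j => cast (congrArg I.A (hσ j).symm) (ve (σ j))) := by
        funext v
        cases v with
        | inl p => rfl
        | inr j => rfl
      rw [hval]
      exact key
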